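/- (König's edge coloring theorem, the bipartite benchmark obtained by iterating the bipartite extension lemma.) Every finite simple bipartite graph G with maximum degree at most Δ admits a proper edge coloring of all of its edges using at most Δ colors; that is, χ'(G) ≤ Δ. -/

import Mathlib

open SimpleGraph

lemma walk_parity {V : Type*} {H : SimpleGraph V} (f : V → Bool)
    (hf : ∀ x y : V, H.Adj x y → f x ≠ f y) :
    ∀ {u v : V} (p : H.Walk u v), (f u = f v) ↔ Even p.length := by
  intro u v p
  induction p with
  | nil => simp
  | @cons u w v h q ih =>
    have h1 := hf _ _ h
    simp only [SimpleGraph.Walk.length_cons, Nat.even_add_one, ← ih]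
    revert h1 ih; cases f u <;> cases f w <;> cases f v <;> simp

lemma alt_walk {V : Type*} {H : SimpleGraph V} (φ : Sym2 V → ℕ) (α β : ℕ)
    (hcol : ∀ x y : V, H.Adj x y → φ s(x,y) = α ∨ φ s(x,y) = β)
    (hprop : ∀ x y y' : V, H.Adj x y → H.Adj x y' → y ≠ y' → φ s(x,y) ≠ φ s(x,y')) :
    ∀ {u w v : V} (h : H.Adj u w) (q : H.Walk w v),
      (SimpleGraph.Walk.cons h q).IsPath →
      ∃ z : V, ∃ _ : H.Adj z v,
        φ s(z,v) = if Even q.length then φ s(u,w) else (if φ s(u,w) = α then β else α) := by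
  intro u w v h q
  induction q generalizing u with
  | nil => intro _; exact ⟨u, h, by simp⟩
  | @cons w w' v h2 q' ih =>
    intro hp
    have hq : (SimpleGraph.Walk.cons h2 q').IsPath := hp.of_cons
    have huw' : u ≠ w' := by
      have hu : u ∉ (SimpleGraph.Walk.cons h2 q').support :=
        ((SimpleGraph.Walk.cons_isPath_iff _ _).mp hp).2
      intro e
      exact hu (by rw [e]; simp [SimpleGraph.Walk.support_cons,
        SimpleGraph.Walk.start_mem_support])
    have hne' : φ s(u,w) ≠ φ s(w,w') := by
      rw [Sym2.eq_swap]
      exact hprop w u w' h.symm h2 huw'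
    have hc1 := hcol _ _ h
    have hc2 := hcol _ _ h2
    have hswap : φ s(w,w') = (if φ s(u,w) = α then β else α) := by
      rcases hc1 with h1 | h1 <;> rcases hc2 with h2' | h2' <;>
        rw [h1, h2'] <;> rw [h1, h2'] at hne' <;>
        first
          | exact absurd rfl hne'
          | (simp; done)
          | (by_cases hba : β = α <;> simp [hba])
    obtain ⟨z, hz, hzc⟩ := ih h2 hq
    refine ⟨z, hz, ?_⟩
    rw [hzc, hswap]
    simp only [SimpleGraph.Walk.length_cons, Nat.even_add_one]
    by_cases hE : Even q'.length
    · simp [hE]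
    · simp only [hE, if_neg, if_false, if_true, ite_not]
      rcases hc1 with h1 | h1 <;> by_cases hba : β = α <;> simp [h1, hba, if_true]

/-- **König's edge coloring theorem.** Every finite simple bipartite graph with maximum
degree at most `Δ` admits a proper edge coloring of all of its edges with at most
`Δ` colors. -/
theorem koenig_edge_coloring {V : Type*} [Fintype V] [DecidableEq V]
    (G : SimpleGraph V) [DecidableRel G.Adj]
    (f : V → Bool) (hbip : ∀ a b : V, G.Adj a b → f a ≠ f b)
    (Δ : ℕ) (hΔ : ∀ v : V, G.degree v ≤ Δ) :
    ∃ φ : Sym2 V → ℕ,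
      (∀ e ∈ G.edgeSet, φ e < Δ) ∧
      (∀ e₁ ∈ G.edgeSet, ∀ e₂ ∈ G.edgeSet,
        e₁ ≠ e₂ → (∃ x : V, x ∈ e₁ ∧ x ∈ e₂) → φ e₁ ≠ φ e₂) := by
  classical
  have main : ∀ (n : ℕ) (E : Finset (Sym2 V)), E.card ≤ n → ↑E ⊆ G.edgeSet →
      ∃ φ : Sym2 V → ℕ, (∀ e ∈ E, φ e < Δ) ∧
        (∀ e₁ ∈ E, ∀ e₂ ∈ E, e₁ ≠ e₂ → (∃ x : V, x ∈ e₁ ∧ x ∈ e₂) → φ e₁ ≠ φ e₂) := by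
    intro n
    induction n with
    | zero =>
      intro E hc _
      have : E = ∅ := Finset.card_eq_zero.mp (Nat.le_zero.mp hc)
      subst this
      exact ⟨fun _ => 0, by simp, by simp⟩
    | succ n ih =>
      intro E hcard hsub
      rcases E.eq_empty_or_nonempty with rfl | ⟨e, he⟩
      · exact ⟨fun _ => 0, by simp, by simp⟩
      obtain ⟨⟨a, b⟩, rfl⟩ := Quot.exists_rep e
      have hee : (s(a, b) : Sym2 V) ∈ E := he
      have hab : G.Adj a b := hsub hee
      have hneab : a ≠ b := hab.ne
      set E' : Finset (Sym2 V) := E.erase s(a, b) with hE'def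
      have hsub' : ↑E' ⊆ G.edgeSet := fun x hx => hsub (Finset.mem_of_mem_erase hx)
      have hcard' : E'.card ≤ n := by
        have h1 : E'.card = E.card - 1 := Finset.card_erase_of_mem hee
        have h2 : 0 < E.card := Finset.card_pos.mpr ⟨_, hee⟩
        omega
      obtain ⟨φ, hφlt, hφprop⟩ := ih E' hcard' hsub'
      set usedAt : V → Finset ℕ := fun v => (E'.filter (fun e' => v ∈ e')).image φ
        with husedAt
      have hmiss : ∀ v, v ∈ (s(a, b) : Sym2 V) → ∃ c, c < Δ ∧ c ∉ usedAt v := by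
        intro v hv
        have hsubinc : E.filter (fun e' => v ∈ e') ⊆ G.incidenceFinset v := by
          intro x hx
          rw [Finset.mem_filter] at hx
          rw [SimpleGraph.mem_incidenceFinset]
          exact ⟨hsub hx.1, hx.2⟩
        have h1 : (E.filter (fun e' => v ∈ e')).card ≤ Δ := by
          calc (E.filter (fun e' => v ∈ e')).card ≤ (G.incidenceFinset v).card :=
                Finset.card_le_card hsubinc
            _ = G.degree v := G.card_incidenceFinset_eq_degree v
            _ ≤ Δ := hΔ v
        have h2 : (E'.filter (fun e' => v ∈ e')).card < (E.filter (fun e' => v ∈ e')).card := by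
          rw [hE'def, Finset.filter_erase]
          exact Finset.card_erase_lt_of_mem (Finset.mem_filter.mpr ⟨hee, hv⟩)
        have h3 : (usedAt v).card < Δ := by
          calc (usedAt v).card ≤ (E'.filter (fun e' => v ∈ e')).card := Finset.card_image_le
            _ < Δ := lt_of_lt_of_le h2 h1
        have h4 : ¬ (Finset.range Δ ⊆ usedAt v) := by
          intro hss
          have := Finset.card_le_card hss
          rw [Finset.card_range] at this
          omega
        obtain ⟨c, hc1, hc2⟩ := Finset.not_subset.mp h4
        exact ⟨c, Finset.mem_range.mp hc1, hc2⟩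
      obtain ⟨α, hαΔ, hαa⟩ := hmiss a (by simp)
      obtain ⟨β, hβΔ, hβb⟩ := hmiss b (by simp)
      have hused : ∀ v c, c ∈ usedAt v ↔ ∃ e' ∈ E', v ∈ e' ∧ φ e' = c := by
        intro v c
        simp only [husedAt, Finset.mem_image, Finset.mem_filter]
        constructor
        · rintro ⟨e', ⟨h1, h2⟩, h3⟩; exact ⟨e', h1, h2, h3⟩
        · rintro ⟨e', h1, h2, h3⟩; exact ⟨e', ⟨h1, h2⟩, h3⟩
      by_cases hcase : α ∈ usedAt b
      · -- hard case: alternating path swap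
        have hαβ : α ≠ β := fun h => hβb (h ▸ hcase)
        set H : SimpleGraph V :=
          { Adj := fun x y => x ≠ y ∧ s(x,y) ∈ E' ∧ (φ s(x,y) = α ∨ φ s(x,y) = β),
            symm := ⟨by
              intro x y ⟨h1, h2, h3⟩
              refine ⟨h1.symm, ?_, ?_⟩ <;> rw [Sym2.eq_swap] <;> assumption⟩
            loopless := ⟨fun x h => h.1 rfl⟩ } with hHdef
        have hclose : ∀ e' ∈ E', (φ e' = α ∨ φ e' = β) →
            ∀ x ∈ e', H.Reachable b x → ∀ y ∈ e', H.Reachable b y := by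
          intro e' he' hc x hx hr y hy
          obtain ⟨⟨u, v⟩, rfl⟩ := Quot.exists_rep e'
          have huv : u ≠ v := G.ne_of_adj ((SimpleGraph.mem_edgeSet G).mp (hsub' he'))
          have hadj : H.Adj u v := ⟨huv, he', hc⟩
          rcases Sym2.mem_iff.mp hx with rfl | rfl <;>
            rcases Sym2.mem_iff.mp hy with rfl | rfl
          · exact hr
          · exact hr.trans hadj.reachable
          · exact hr.trans hadj.symm.reachable
          · exact hr
        have hcol : ∀ x y : V, H.Adj x y → φ s(x,y) = α ∨ φ s(x,y) = β := fun x y h => h.2.2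
        have hpropH : ∀ x y y' : V, H.Adj x y → H.Adj x y' → y ≠ y' →
            φ s(x,y) ≠ φ s(x,y') := by
          intro x y y' h h' hyy'
          have hneS : s(x,y) ≠ s(x,y') := fun e => hyy' (Sym2.congr_right.mp e)
          exact hφprop _ h.2.1 _ h'.2.1 hneS ⟨x, by simp, by simp⟩
        have hfH : ∀ x y : V, H.Adj x y → f x ≠ f y := fun x y h =>
          hbip x y ((SimpleGraph.mem_edgeSet G).mp (hsub' h.2.1))
        have hnra : ¬ H.Reachable b a := by
          intro hr
          obtain ⟨p⟩ := hr
          obtain ⟨p', hp⟩ : ∃ p' : H.Walk b a, p'.IsPath := ⟨p.bypass, p.bypass_isPath⟩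
          cases p' with
          | nil => exact hneab rfl
          | @cons _ w _ h1 q =>
            have hbw : (s(b, w) : Sym2 V) ∈ E' := h1.2.1
            have hfc : φ s(b, w) = α := by
              rcases h1.2.2 with h | h
              · exact h
              · exact absurd ((hused b β).mpr ⟨_, hbw, by simp, h⟩) hβb
            have hpar : ¬ Even (SimpleGraph.Walk.cons h1 q).length := by
              rw [← walk_parity f hfH]
              exact fun hfb => (hbip a b hab) hfb.symm
            have hq : Even q.length := by
              simp only [SimpleGraph.Walk.length_cons, Nat.even_add_one, not_not] at hpar
              exact hpar
            obtain ⟨z, hz, hzc⟩ := alt_walk φ α β hcol hpropH h1 q hp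
            rw [if_pos hq, hfc] at hzc
            exact hαa ((hused a α).mpr ⟨_, hz.2.1, by simp, hzc⟩)
        set cond : Sym2 V → Prop := fun e' =>
          e' ∈ E' ∧ (φ e' = α ∨ φ e' = β) ∧ ∃ x ∈ e', H.Reachable b x with hconddef
        have hcondmem : ∀ e', cond e' → ∀ x ∈ e', H.Reachable b x := by
          intro e' hc x hx
          obtain ⟨he', hcc, x₀, hx₀, hr⟩ := hc
          exact hclose e' he' hcc x₀ hx₀ hr x hx
        set ψ : Sym2 V → ℕ := fun e' =>
          if cond e' then (if φ e' = α then β else α) else if e' = s(a,b) then α else φ e'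
          with hψdef
        have hψ_pos : ∀ e', cond e' → ψ e' = (if φ e' = α then β else α) := by
          intro e' h; simp only [hψdef]; rw [if_pos h]
        have hψ_neg : ∀ e', ¬ cond e' → e' ≠ s(a,b) → ψ e' = φ e' := by
          intro e' h h2; simp only [hψdef]; rw [if_neg h, if_neg h2]
        have hψ_e : ψ s(a,b) = α := by
          have hnc : ¬ cond s(a,b) := fun hc => (Finset.notMem_erase _ _) hc.1
          simp only [hψdef]; rw [if_neg hnc]; simp
        have hψ_pos_val : ∀ e', cond e' → ψ e' = α ∨ ψ e' = β := by
          intro e' h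
          rw [hψ_pos e' h]
          rcases h.2.1 with h1 | h1
          · right; rw [if_pos h1]
          · left; rw [h1, if_neg (Ne.symm hαβ)]
        refine ⟨ψ, ?_, ?_⟩
        · intro e' he'
          by_cases hc : cond e'
          · rw [hψ_pos _ hc]
            rcases hc.2.1 with h | h
            · rw [if_pos h]; exact hβΔ
            · rw [h, if_neg (Ne.symm hαβ)]; exact hαΔ
          · by_cases h2 : e' = s(a,b)
            · rw [h2, hψ_e]; exact hαΔ
            · rw [hψ_neg _ hc h2]; exact hφlt e' (Finset.mem_erase.mpr ⟨h2, he'⟩)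
        · have mixed : ∀ e₁' ∈ E, ∀ e₂' ∈ E, ∀ x' : V, x' ∈ e₁' → x' ∈ e₂' →
              cond e₁' → ¬ cond e₂' → ψ e₁' ≠ ψ e₂' := by
            intro e₁' he₁' e₂' he₂' x' hx1' hx2' hc1 hc2
            have hrx : H.Reachable b x' := hcondmem _ hc1 x' hx1'
            by_cases h2ab : e₂' = s(a,b)
            · subst h2ab
              rw [hψ_e, hψ_pos _ hc1]
              rcases hc1.2.1 with h1 | h1
              · rw [if_pos h1]; exact Ne.symm hαβ
              · exfalso
                rcases Sym2.mem_iff.mp hx2' with rfl | rfl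
                · exact hnra hrx
                · exact hβb ((hused _ β).mpr ⟨_, hc1.1, hx1', h1⟩)
            · have hc2' : e₂' ∈ E' := Finset.mem_erase.mpr ⟨h2ab, he₂'⟩
              rw [hψ_neg _ hc2 h2ab]
              by_cases hc2col : φ e₂' = α ∨ φ e₂' = β
              · exact absurd ⟨hc2', hc2col, x', hx2', hrx⟩ hc2
              · intro heq
                rcases hψ_pos_val _ hc1 with h | h
                · rw [h] at heq; exact hc2col (Or.inl heq.symm)
                · rw [h] at heq; exact hc2col (Or.inr heq.symm)
          intro e₁ he₁ e₂ he₂ hne hx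
          obtain ⟨x, hx1, hx2⟩ := hx
          by_cases hc1 : cond e₁ <;> by_cases hc2 : cond e₂
          · rw [hψ_pos _ hc1, hψ_pos _ hc2]
            have hne' : φ e₁ ≠ φ e₂ := hφprop _ hc1.1 _ hc2.1 hne ⟨x, hx1, hx2⟩
            rcases hc1.2.1 with h1 | h1 <;> rcases hc2.2.1 with h2 | h2
            · exact absurd (h1.trans h2.symm) hne'
            · rw [if_pos h1, h2, if_neg (Ne.symm hαβ)]; exact Ne.symm hαβ
            · rw [h1, if_neg (Ne.symm hαβ), if_pos h2]; exact hαβ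
            · exact absurd (h1.trans h2.symm) hne'
          · exact mixed e₁ he₁ e₂ he₂ x hx1 hx2 hc1 hc2
          · exact (mixed e₂ he₂ e₁ he₁ x hx2 hx1 hc2 hc1).symm
          · by_cases h1ab : e₁ = s(a,b) <;> by_cases h2ab : e₂ = s(a,b)
            · exact absurd (h1ab.trans h2ab.symm) hne
            · subst h1ab
              rw [hψ_e, hψ_neg _ hc2 h2ab]
              have he₂' : e₂ ∈ E' := Finset.mem_erase.mpr ⟨h2ab, he₂⟩
              intro heq
              rcases Sym2.mem_iff.mp hx1 with rfl | rfl
              · exact hαa ((hused _ α).mpr ⟨_, he₂', hx2, heq.symm⟩)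
              · exact hc2 ⟨he₂', Or.inl heq.symm, _, hx2, SimpleGraph.Reachable.refl _⟩
            · subst h2ab
              rw [hψ_e, hψ_neg _ hc1 h1ab]
              have he₁' : e₁ ∈ E' := Finset.mem_erase.mpr ⟨h1ab, he₁⟩
              intro heq
              rcases Sym2.mem_iff.mp hx2 with rfl | rfl
              · exact hαa ((hused _ α).mpr ⟨_, he₁', hx1, heq⟩)
              · exact hc1 ⟨he₁', Or.inl heq, _, hx1, SimpleGraph.Reachable.refl _⟩
            · rw [hψ_neg _ hc1 h1ab, hψ_neg _ hc2 h2ab]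
              exact hφprop _ (Finset.mem_erase.mpr ⟨h1ab, he₁⟩) _
                (Finset.mem_erase.mpr ⟨h2ab, he₂⟩) hne ⟨x, hx1, hx2⟩
      · -- easy case: α unused at both a and b
        refine ⟨fun e' => if e' = s(a,b) then α else φ e', ?_, ?_⟩
        · intro e' he'
          by_cases h : e' = s(a,b)
          · simpa [h] using hαΔ
          · simpa [h] using hφlt e' (Finset.mem_erase.mpr ⟨h, he'⟩)
        · intro e₁ he₁ e₂ he₂ hne hx
          obtain ⟨x, hx1, hx2⟩ := hx
          have key : ∀ e' ∈ E', x ∈ e' → x ∈ (s(a,b) : Sym2 V) → φ e' ≠ α := by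
            intro e' he' hxe hxab heq
            have hmem : α ∈ usedAt x := (hused x α).mpr ⟨e', he', hxe, heq⟩
            rcases Sym2.mem_iff.mp hxab with rfl | rfl
            · exact hαa hmem
            · exact hcase hmem
          by_cases h1 : e₁ = s(a,b) <;> by_cases h2 : e₂ = s(a,b)
          · exact absurd (h1.trans h2.symm) hne
          · have he₂' : e₂ ∈ E' := Finset.mem_erase.mpr ⟨h2, he₂⟩
            simp only [h1, if_pos rfl, if_neg h2]
            exact fun heq => key e₂ he₂' hx2 (h1 ▸ hx1) heq.symm
          · have he₁' : e₁ ∈ E' := Finset.mem_erase.mpr ⟨h1, he₁⟩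
            simp only [h2, if_pos rfl, if_neg h1]
            exact key e₁ he₁' hx1 (h2 ▸ hx2)
          · simp only [if_neg h1, if_neg h2]
            exact hφprop e₁ (Finset.mem_erase.mpr ⟨h1, he₁⟩) e₂
              (Finset.mem_erase.mpr ⟨h2, he₂⟩) hne ⟨x, hx1, hx2⟩
  obtain ⟨φ, h1, h2⟩ := main G.edgeFinset.card G.edgeFinset le_rfl
    (G.coe_edgeFinset ▸ subset_rfl)
  exact ⟨φ, fun e he => h1 e (SimpleGraph.mem_edgeFinset.mpr he),
    fun e₁ he₁ e₂ he₂ hne hx => h2 e₁ (SimpleGraph.mem_edgeFinset.mpr he₁)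
      e₂ (SimpleGraph.mem_edgeFinset.mpr he₂) hne hx⟩
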